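/- Let A_1, ..., A_n be events in a finite probability space, and for each i let N(i) ⊆ {1,...,n} be a set of indices containing i. Suppose there are reals ε_1, ..., ε_n ∈ (0,1) such that Pr[A_i] ≤ ε_i · ∏_{j ∈ N(i), j ≠ i} (1 − ε_j) for every i, and such that each A_i is mutually independent of the collection {A_j : j ∉ N(i), j ≠ i}. Then Pr[⋂_{i=1}^n A_i^c] ≥ ∏_{i=1}^n (1 − ε_i); in particular this probability is positive. -/
import Mathlib

/-- Intersection of complements of the events indexed by a finset. -/
def LLL.C {Ω : Type*} {n : ℕ} (A : Fin n → Set Ω) (S : Finset (Fin n)) : Set Ω :=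
  ⋂ j ∈ S, (A j)ᶜ

open Finset in
/-- General (asymmetric) Lovász Local Lemma on a finite probability space. -/
theorem lovasz_local_lemma
    {Ω : Type*} [Fintype Ω] (p : Ω → ℝ)
    (hp : ∀ ω, 0 ≤ p ω) (hsum : ∑ ω, p ω = 1)
    (Pr : Set Ω → ℝ) (hPr : ∀ S : Set Ω, Pr S = ∑ ω, S.indicator p ω)
    (n : ℕ) (A : Fin n → Set Ω) (N : Fin n → Finset (Fin n))
    (hself : ∀ i, i ∈ N i)
    (ε : Fin n → ℝ) (hε0 : ∀ i, 0 < ε i) (hε1 : ∀ i, ε i < 1)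
    (hbound : ∀ i, Pr (A i) ≤ ε i * ∏ j ∈ (N i).erase i, (1 - ε j))
    (hindep : ∀ i, ∀ T : Finset (Fin n), (∀ j ∈ T, j ∉ N i) →
      Pr (A i ∩ ⋂ j ∈ T, A j) = Pr (A i) * Pr (⋂ j ∈ T, A j)) :
    ∏ i, (1 - ε i) ≤ Pr (⋂ i, (A i)ᶜ) ∧ 0 < Pr (⋂ i, (A i)ᶜ) := by
  classical
  set C := LLL.C A with hCdef
  -- basic facts about Pr
  have prNonneg : ∀ S : Set Ω, 0 ≤ Pr S := by
    intro S; rw [hPr]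
    exact Finset.sum_nonneg fun ω _ => Set.indicator_nonneg (fun ω _ => hp ω) ω
  have prMono : ∀ S T : Set Ω, S ⊆ T → Pr S ≤ Pr T := by
    intro S T h; rw [hPr, hPr]
    refine Finset.sum_le_sum fun ω _ => ?_
    by_cases hω : ω ∈ S
    · have : ω ∈ T := h hω
      simp [Set.indicator_apply, hω, this]
    · simp only [Set.indicator_apply, hω, if_false]
      exact Set.indicator_nonneg (fun ω _ => hp ω) ω
  have prUniv : Pr Set.univ = 1 := by
    rw [hPr]; simpa using hsum
  have prDiff : ∀ (X D : Set Ω), Pr (X ∩ Dᶜ) = Pr X - Pr (X ∩ D) := by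
    intro X D
    rw [hPr, hPr, hPr, ← Finset.sum_sub_distrib]
    refine Finset.sum_congr rfl fun ω _ => ?_
    by_cases hx : ω ∈ X <;> by_cases hd : ω ∈ D <;>
      simp [Set.indicator_apply, hx, hd]
  have Cempty : C ∅ = Set.univ := by simp [hCdef, LLL.C]
  have Cinsert : ∀ (a : Fin n) (S : Finset (Fin n)),
      C (insert a S) = C S ∩ (A a)ᶜ := by
    intro a S
    simp only [hCdef, LLL.C, Finset.set_biInter_insert]
    exact Set.inter_comm _ _
  have Cmono : ∀ S T : Finset (Fin n), S ⊆ T → C T ⊆ C S := by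
    intro S T h ω hω
    simp only [hCdef, LLL.C, Set.mem_iInter] at hω ⊢
    exact fun j hj => hω j (h hj)
  -- independence w.r.t. intersections of complements
  have indepC : ∀ (i : Fin n) (S : Finset (Fin n)), (∀ j ∈ S, j ∉ N i) →
      ∀ U : Finset (Fin n), (∀ j ∈ U, j ∉ N i) →
      Pr (A i ∩ ((⋂ j ∈ U, A j) ∩ C S)) = Pr (A i) * Pr ((⋂ j ∈ U, A j) ∩ C S) := by
    intro i S
    induction S using Finset.induction_on with
    | empty =>
        intro _ U hU
        rw [Cempty]
        simpa using hindep i U hU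
    | @insert a S ha ih =>
        intro hins U hU
        have haN : a ∉ N i := hins a (Finset.mem_insert_self a S)
        have hS : ∀ j ∈ S, j ∉ N i := fun j hj => hins j (Finset.mem_insert_of_mem hj)
        have hU' : ∀ j ∈ insert a U, j ∉ N i := by
          intro j hj
          rcases Finset.mem_insert.mp hj with h | h
          · exact h ▸ haN
          · exact hU j h
        have e1 : A i ∩ ((⋂ j ∈ U, A j) ∩ C (insert a S))
            = (A i ∩ ((⋂ j ∈ U, A j) ∩ C S)) ∩ (A a)ᶜ := by
          rw [Cinsert]; ext ω; simp only [Set.mem_inter_iff, Set.mem_compl_iff]; tauto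
        have e2 : (A i ∩ ((⋂ j ∈ U, A j) ∩ C S)) ∩ A a
            = A i ∩ ((⋂ j ∈ insert a U, A j) ∩ C S) := by
          rw [Finset.set_biInter_insert]
          ext ω; simp only [Set.mem_inter_iff]; tauto
        have e3 : (⋂ j ∈ U, A j) ∩ C (insert a S)
            = ((⋂ j ∈ U, A j) ∩ C S) ∩ (A a)ᶜ := by
          rw [Cinsert]; ext ω; simp only [Set.mem_inter_iff, Set.mem_compl_iff]; tauto
        have e4 : ((⋂ j ∈ U, A j) ∩ C S) ∩ A a
            = (⋂ j ∈ insert a U, A j) ∩ C S := by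
          rw [Finset.set_biInter_insert]
          ext ω; simp only [Set.mem_inter_iff]; tauto
        rw [e1, prDiff, e2, ih hS U hU, ih hS (insert a U) hU',
          e3, prDiff, e4]
        ring
  have indepC' : ∀ (i : Fin n) (S : Finset (Fin n)), (∀ j ∈ S, j ∉ N i) →
      Pr (A i ∩ C S) = Pr (A i) * Pr (C S) := by
    intro i S hS
    have := indepC i S hS ∅ (by simp)
    simpa using this
  -- the key conditional bound, by strong induction on the cardinality
  have key : ∀ m : ℕ, ∀ S : Finset (Fin n), S.card < m → ∀ i, i ∉ S →
      Pr (A i ∩ C S) ≤ ε i * Pr (C S) := by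
    intro m
    induction m with
    | zero => intro S hS; omega
    | succ m ih =>
        intro S hS i hi
        set S₁ : Finset (Fin n) := S ∩ N i with hS₁
        set S₂ : Finset (Fin n) := S \ N i with hS₂
        have hunion : S₁ ∪ S₂ = S := by rw [hS₁, hS₂]; ext x; simp only [Finset.mem_union, Finset.mem_inter, Finset.mem_sdiff]; tauto
        have hS₂N : ∀ j ∈ S₂, j ∉ N i := fun j hj => (Finset.mem_sdiff.mp hj).2
        -- peeling lemma
        have peel : ∀ T : Finset (Fin n), T ⊆ S₁ →
            (∏ j ∈ T, (1 - ε j)) * Pr (C S₂) ≤ Pr (C (T ∪ S₂)) := by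
          intro T
          induction T using Finset.induction_on with
          | empty => simp
          | @insert a T ha ihT =>
              intro hsub
              have hTsub : T ⊆ S₁ := fun x hx => hsub (Finset.mem_insert_of_mem hx)
              have haS₁ : a ∈ S₁ := hsub (Finset.mem_insert_self a T)
              have haS : a ∈ S := (Finset.mem_inter.mp haS₁).1
              have haN : a ∈ N i := (Finset.mem_inter.mp haS₁).2
              have haS₂ : a ∉ S₂ := fun h => (Finset.mem_sdiff.mp h).2 haN
              have haU : a ∉ T ∪ S₂ := by
                simp only [Finset.mem_union]; tauto
              have hUsub : T ∪ S₂ ⊆ S.erase a := by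
                intro x hx
                rcases Finset.mem_union.mp hx with h | h
                · refine Finset.mem_erase.mpr ⟨?_, (Finset.mem_inter.mp (hTsub h)).1⟩
                  rintro rfl; exact ha h
                · refine Finset.mem_erase.mpr ⟨?_, (Finset.mem_sdiff.mp h).1⟩
                  rintro rfl; exact haS₂ h
              have hcard : (T ∪ S₂).card < m := by
                have h1 : (T ∪ S₂).card ≤ (S.erase a).card := Finset.card_le_card hUsub
                have h2 : (S.erase a).card = S.card - 1 := Finset.card_erase_of_mem haS
                have h3 : 1 ≤ S.card := Finset.card_pos.mpr ⟨a, haS⟩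
                omega
              have h1 := ih (T ∪ S₂) hcard a haU
              have h2 : Pr (C (insert a T ∪ S₂)) = Pr (C (T ∪ S₂)) - Pr (C (T ∪ S₂) ∩ A a) := by
                rw [Finset.insert_union, Cinsert, prDiff]
              have h3 : Pr (C (T ∪ S₂) ∩ A a) = Pr (A a ∩ C (T ∪ S₂)) := by
                rw [Set.inter_comm]
              have h4 : (∏ j ∈ T, (1 - ε j)) * Pr (C S₂) ≤ Pr (C (T ∪ S₂)) := ihT hTsub
              have h5 : (0:ℝ) ≤ 1 - ε a := le_of_lt (by linarith [hε1 a])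
              rw [Finset.prod_insert ha, h2]
              have h6 : (1 - ε a) * ((∏ j ∈ T, (1 - ε j)) * Pr (C S₂))
                  ≤ (1 - ε a) * Pr (C (T ∪ S₂)) := mul_le_mul_of_nonneg_left h4 h5
              rw [h3]
              nlinarith [h6, h1]
        -- combine
        have hS₁sub : S₁ ⊆ (N i).erase i := by
          intro j hj
          rcases Finset.mem_inter.mp hj with ⟨hjS, hjN⟩
          refine Finset.mem_erase.mpr ⟨?_, hjN⟩
          rintro rfl; exact hi hjS
        have step1 : Pr (A i ∩ C S) ≤ Pr (A i ∩ C S₂) := by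
          apply prMono
          exact Set.inter_subset_inter_right _ (Cmono _ _ (Finset.sdiff_subset))
        have step2 : Pr (A i ∩ C S₂) = Pr (A i) * Pr (C S₂) := indepC' i S₂ hS₂N
        have prodrest : ∏ j ∈ (N i).erase i, (1 - ε j) ≤ ∏ j ∈ S₁, (1 - ε j) := by
          rw [← Finset.prod_sdiff hS₁sub]
          have hle1 : ∏ j ∈ (N i).erase i \ S₁, (1 - ε j) ≤ 1 :=
            Finset.prod_le_one (fun j _ => le_of_lt (by linarith [hε1 j]))
              (fun j _ => by linarith [hε0 j])
          have hpos : (0:ℝ) ≤ ∏ j ∈ S₁, (1 - ε j) :=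
            Finset.prod_nonneg fun j _ => le_of_lt (by linarith [hε1 j])
          nlinarith
        have step3 : Pr (A i) ≤ ε i * ∏ j ∈ S₁, (1 - ε j) := by
          calc Pr (A i) ≤ ε i * ∏ j ∈ (N i).erase i, (1 - ε j) := hbound i
            _ ≤ ε i * ∏ j ∈ S₁, (1 - ε j) :=
              mul_le_mul_of_nonneg_left prodrest (le_of_lt (hε0 i))
        have step4 : (∏ j ∈ S₁, (1 - ε j)) * Pr (C S₂) ≤ Pr (C S) := by
          have := peel S₁ (le_refl S₁)
          rwa [hunion] at this
        calc Pr (A i ∩ C S) ≤ Pr (A i) * Pr (C S₂) := by rw [← step2]; exact step1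
          _ ≤ (ε i * ∏ j ∈ S₁, (1 - ε j)) * Pr (C S₂) :=
              mul_le_mul_of_nonneg_right step3 (prNonneg _)
          _ = ε i * ((∏ j ∈ S₁, (1 - ε j)) * Pr (C S₂)) := by ring
          _ ≤ ε i * Pr (C S) := mul_le_mul_of_nonneg_left step4 (le_of_lt (hε0 i))
  -- main bound
  have final : ∀ S : Finset (Fin n), ∏ j ∈ S, (1 - ε j) ≤ Pr (C S) := by
    intro S
    induction S using Finset.induction_on with
    | empty => rw [Cempty]; simp [prUniv]
    | @insert a S ha ihS =>
        have h1 := key (S.card + 1) S (Nat.lt_succ_self _) a ha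
        have h2 : Pr (C (insert a S)) = Pr (C S) - Pr (C S ∩ A a) := by
          rw [Cinsert, prDiff]
        have h3 : Pr (C S ∩ A a) = Pr (A a ∩ C S) := by rw [Set.inter_comm]
        have h5 : (0:ℝ) ≤ 1 - ε a := le_of_lt (by linarith [hε1 a])
        rw [Finset.prod_insert ha, h2, h3]
        nlinarith [mul_le_mul_of_nonneg_left ihS h5, h1]
  have huniv : (⋂ i, (A i)ᶜ) = C Finset.univ := by
    simp [hCdef, LLL.C]
  have hmain : ∏ i, (1 - ε i) ≤ Pr (⋂ i, (A i)ᶜ) := by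
    rw [huniv]; exact final Finset.univ
  have hpos : (0:ℝ) < ∏ i, (1 - ε i) :=
    Finset.prod_pos fun i _ => by linarith [hε1 i]
  exact ⟨hmain, lt_of_lt_of_le hpos hmain⟩
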